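/- Let C be a category with finite limits and let n ≤ m be natural numbers. Then for any simplicial object X in C, the canonical map cosk_n(X) → cosk_m(cosk_n(X)) induced by the adjunction unit is an isomorphism, i.e. cosk_n is naturally isomorphic to cosk_m ∘ cosk_n. (This corrects a wrongly stated claim in SGA 4 V 7.1.2.) -/

import Mathlib

open CategoryTheory CategoryTheory.SimplicialObject CategoryTheory.Limits

section Auxiliary

open SimplexCategory Functor

/-! ### Finiteness of the comma categories `StructuredArrow b (Truncated.inclusion n).op` -/

instance simplexCategory_hom_finite (a b : SimplexCategory) : Finite (a ⟶ b) :=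
  Finite.of_injective (fun f => f.toOrderHom.toFun) (by
    intro f g h
    ext x : 3
    exact congrFun h x)

instance simplexCategory_op_hom_finite (a b : SimplexCategoryᵒᵖ) : Finite (a ⟶ b) :=
  Finite.of_injective (fun f => f.unop) (fun _ _ h => Quiver.Hom.unop_inj h)

instance truncated_finite (n : ℕ) : Finite (SimplexCategory.Truncated n) := by
  apply Finite.of_injective (fun a => (⟨a.obj.len, Nat.lt_succ_of_le a.property⟩ : Fin (n + 1)))
  intro a b h
  apply ObjectProperty.FullSubcategory.ext
  exact SimplexCategory.ext (congrArg Fin.val h)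

instance truncated_hom_finite (n : ℕ) (x y : SimplexCategory.Truncated n) : Finite (x ⟶ y) :=
  Finite.of_injective (fun f => f.hom) (fun _ _ h => ObjectProperty.hom_ext _ h)

instance truncated_op_hom_finite (n : ℕ) (x y : (SimplexCategory.Truncated n)ᵒᵖ) :
    Finite (x ⟶ y) :=
  Finite.of_injective (fun f => f.unop) (fun _ _ h => Quiver.Hom.unop_inj h)

instance truncated_op_finite (n : ℕ) : Finite ((SimplexCategory.Truncated n)ᵒᵖ) :=
  Finite.of_equiv _ Opposite.equivToOpposite

instance structuredArrow_truncated_finite (n : ℕ) (b : SimplexCategoryᵒᵖ) :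
    Finite (StructuredArrow b (Truncated.inclusion n).op) := by
  apply Finite.of_injective
    (fun a => (⟨a.right, a.hom⟩ :
      Σ r : (SimplexCategory.Truncated n)ᵒᵖ, b ⟶ (Truncated.inclusion n).op.obj r))
  intro a a' h
  obtain ⟨h1, h2⟩ := Sigma.mk.inj_iff.mp h
  obtain ⟨⟨⟨⟩⟩, r, hom⟩ := a
  obtain ⟨⟨⟨⟩⟩, r', hom'⟩ := a'
  obtain rfl := h1
  obtain rfl := (heq_iff_eq.mp h2)
  rfl

instance structuredArrow_truncated_hom_finite (n : ℕ) (b : SimplexCategoryᵒᵖ)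
    (x y : StructuredArrow b (Truncated.inclusion n).op) : Finite (x ⟶ y) := by
  apply Finite.of_injective (fun f => f.right)
  intro f g h
  ext
  · exact h

noncomputable instance structuredArrow_truncated_finCategory (n : ℕ) (b : SimplexCategoryᵒᵖ) :
    FinCategory (StructuredArrow b (Truncated.inclusion n).op) where
  fintypeObj := Fintype.ofFinite _
  fintypeHom _ _ := Fintype.ofFinite _

/-- In a category with finite limits, pointwise right Kan extensions along the (opposite of the)
inclusion of the `n`-truncated simplex category exist, since the relevant comma categories are
finite. -/
instance hasPointwiseRKE_truncated_inclusion {C : Type*} [Category C] [HasFiniteLimits C]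
    (n : ℕ) (F : (SimplexCategory.Truncated n)ᵒᵖ ⥤ C) :
    (Truncated.inclusion n).op.HasPointwiseRightKanExtension F := by
  intro b
  dsimp [Functor.HasPointwiseRightKanExtensionAt]
  infer_instance

/-- If the counit of an adjunction is an isomorphism, the unit is an isomorphism at every object
in the image of the right adjoint. -/
lemma isIso_unit_app_of_isIso_counit' {C D : Type*} [Category C] [Category D]
    {L : C ⥤ D} {R : D ⥤ C} (adj : L ⊣ R) [IsIso adj.counit] (Z : D) :
    IsIso (adj.unit.app (R.obj Z)) := by
  have h := adj.right_triangle_components Z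
  have : IsIso (R.map (adj.counit.app Z)) := by
    have : IsIso (adj.counit.app Z) := inferInstance
    infer_instance
  haveI : IsIso (𝟙 (R.obj Z)) := inferInstance
  exact IsIso.of_isIso_fac_right h

variable {C : Type*} [Category C] [HasFiniteLimits C]

/-- The canonical functor from the comma category over the `n`-truncated inclusion to the one over
the `m`-truncated inclusion, for `n ≤ m`. -/
def iotaStructuredArrow (n m : ℕ) (hnm : n ≤ m) (b : SimplexCategoryᵒᵖ) :
    StructuredArrow b (Truncated.inclusion n).op ⥤
      StructuredArrow b (Truncated.inclusion m).op where
  obj a := StructuredArrow.mk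
    (Y := Opposite.op (⟨a.right.unop.obj, a.right.unop.property.trans hnm⟩ :
      SimplexCategory.Truncated m))
    a.hom
  map {a a'} φ := StructuredArrow.homMk
    ((ObjectProperty.homMk (X := (⟨a'.right.unop.obj, a'.right.unop.property.trans hnm⟩ :
      SimplexCategory.Truncated m)) (Y := ⟨a.right.unop.obj, a.right.unop.property.trans hnm⟩)
      φ.right.unop.hom).op)
    (by simpa using StructuredArrow.w φ)

/-- If a simplicial object `Y` is a pointwise right Kan extension of its `n`-truncation, it is
also a pointwise right Kan extension of its `m`-truncation, for any `n ≤ m`. -/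
noncomputable def pointwiseRKEOfLe (n m : ℕ) (hnm : n ≤ m) (Y : SimplicialObject C)
    (hn : (Truncated.rightExtensionInclusion Y n).IsPointwiseRightKanExtension) :
    (Truncated.rightExtensionInclusion Y m).IsPointwiseRightKanExtension := by
  intro b
  exact IsLimit.mk
    (fun s => (hn b).lift (s.whisker (iotaStructuredArrow n m hnm b)))
    (fun s j => by
      apply (hn ((Truncated.inclusion m).op.obj j.right)).hom_ext
      intro a
      dsimp
      have h1 := (hn b).fac (Cone.whisker (iotaStructuredArrow n m hnm b) s)
        (StructuredArrow.mk (Y := a.right) (j.hom ≫ a.hom))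
      have h2 := s.w (StructuredArrow.homMk
        (f := j)
        (f' := (iotaStructuredArrow n m hnm b).obj
          (StructuredArrow.mk (Y := a.right) (j.hom ≫ a.hom)))
        (show j.right ⟶ Opposite.op (⟨a.right.unop.obj, a.right.unop.property.trans hnm⟩ :
            SimplexCategory.Truncated m) from (ObjectProperty.homMk a.hom.unop).op)
        (rfl))
      dsimp at h1 h2
      refine (Category.assoc _ _ _).trans ((whisker_eq _ ?_).trans
        (h1.trans (h2.symm.trans (whisker_eq _ ?_))))
      · simp only [Functor.RightExtension.coneAt_π_app, Truncated.rightExtensionInclusion_hom_app,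
          Category.comp_id]
        erw [Category.comp_id, Category.comp_id, Category.comp_id]
        exact (Functor.map_comp Y _ _).symm
      · simp only [Functor.RightExtension.coneAt_π_app, Truncated.rightExtensionInclusion_hom_app,
          Category.comp_id]
        exact (Category.comp_id _).symm)
    (fun s mφ w => by
      apply (hn b).uniq (s.whisker (iotaStructuredArrow n m hnm b)) mφ
      intro a
      exact w ((iotaStructuredArrow n m hnm b).obj a))

end Auxiliary

/-- For `n ≤ m` and any simplicial object `X` in a category with finite
limits, the canonical adjunction-unit map `cosk_n X ⟶ cosk_m (cosk_n X)` is an isomorphism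
(correcting SGA 4 V 7.1.2). -/
theorem cosk_cosk_of_le {C : Type*} [Category C] [HasFiniteLimits C]
    (n m : ℕ) (hnm : n ≤ m)
    [∀ (F : (SimplexCategory.Truncated n)ᵒᵖ ⥤ C),
      (SimplexCategory.Truncated.inclusion n).op.HasRightKanExtension F]
    [∀ (F : (SimplexCategory.Truncated m)ᵒᵖ ⥤ C),
      (SimplexCategory.Truncated.inclusion m).op.HasRightKanExtension F]
    (X : SimplicialObject C) :
    IsIso ((SimplicialObject.coskAdj m).unit.app ((SimplicialObject.cosk n).obj X)) := by
  set Y := (SimplicialObject.cosk n).obj X with hY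
  haveI hcn : Y.IsCoskeletal n := by
    rw [isCoskeletal_iff_isIso]
    exact isIso_unit_app_of_isIso_counit' (coskAdj n) _
  have hn : (Truncated.rightExtensionInclusion Y n).IsPointwiseRightKanExtension :=
    Functor.isPointwiseRightKanExtensionOfIsRightKanExtension _ (𝟙 _)
  have hm := pointwiseRKEOfLe n m hnm Y hn
  haveI : Y.IsCoskeletal m := ⟨hm.isRightKanExtension⟩
  infer_instance
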